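/- Convexity of the auxiliary function in the proof of Lemma 4: For every constant v ≥ 0, the function f₂(x) = ((v+1)e^x − 1)/x has strictly positive second derivative on (0, ∞); explicitly, f₂''(x) = v (e^x/x)[(1 − 1/x)² + 1/x²] + (e^x/x)[(1 − 1/x)² + (1 − 2e^{−x})/x²] > 0 for all x > 0. -/

import Mathlib

open Set

/-- **Convexity of the auxiliary function in the proof of Lemma 4.**
For every constant `v ≥ 0`, the function `f₂(x) = ((v+1)e^x − 1)/x` has strictly positive
second derivative on `(0, ∞)`; explicitly, for all `x > 0`,
`f₂''(x) = v (e^x/x)[(1 − 1/x)² + 1/x²] + (e^x/x)[(1 − 1/x)² + (1 − 2e^{−x})/x²] > 0`. -/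
theorem auxiliary_function_second_derivative
    (v : ℝ) (hv : 0 ≤ v)
    (f₂ : ℝ → ℝ) (hf₂ : ∀ x, f₂ x = ((v + 1) * Real.exp x - 1) / x) :
    ∀ x ∈ Ioi (0 : ℝ),
      deriv (deriv f₂) x
          = v * (Real.exp x / x) * ((1 - 1 / x) ^ 2 + 1 / x ^ 2)
            + (Real.exp x / x) * ((1 - 1 / x) ^ 2 + (1 - 2 * Real.exp (-x)) / x ^ 2) ∧
      0 < deriv (deriv f₂) x := by
  have hfe : f₂ = fun x => ((v + 1) * Real.exp x - 1) / x := funext hf₂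
  subst hfe
  set g : ℝ → ℝ :=
    fun x => ((v + 1) * Real.exp x * x - ((v + 1) * Real.exp x - 1) * 1) / x ^ 2 with hg
  have hd1 : ∀ x : ℝ, x ≠ 0 →
      HasDerivAt (fun x => ((v + 1) * Real.exp x - 1) / x) (g x) x := by
    intro x hx
    have h1 : HasDerivAt (fun x => (v + 1) * Real.exp x - 1) ((v + 1) * Real.exp x) x := by
      simpa using ((Real.hasDerivAt_exp x).const_mul (v + 1)).sub_const 1
    have h2 : HasDerivAt (fun x : ℝ => x) 1 x := hasDerivAt_id x
    exact h1.div h2 hx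
  intro x hx
  have hx0 : (0:ℝ) < x := hx
  have hxne : x ≠ 0 := ne_of_gt hx0
  have hev : deriv (fun x => ((v + 1) * Real.exp x - 1) / x) =ᶠ[nhds x] g := by
    filter_upwards [isOpen_Ioi.mem_nhds hx] with y hy
    exact (hd1 y (ne_of_gt hy)).deriv
  have hd2 : HasDerivAt g
      (((v + 1) * Real.exp x * x * (x ^ 2)
          - ((v + 1) * Real.exp x * x - ((v + 1) * Real.exp x - 1) * 1) * (2 * x))
        / (x ^ 2) ^ 2) x := by
    have hA : HasDerivAt (fun x => (v + 1) * Real.exp x) ((v + 1) * Real.exp x) x :=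
      (Real.hasDerivAt_exp x).const_mul (v + 1)
    have h1 : HasDerivAt
        (fun x => (v + 1) * Real.exp x * x - ((v + 1) * Real.exp x - 1) * 1)
        ((v + 1) * Real.exp x * x) x := by
      have := (hA.mul (hasDerivAt_id' x)).sub ((hA.sub_const 1).mul_const 1)
      simpa [Pi.mul_def, Pi.sub_def] using this
    have h2 : HasDerivAt (fun x : ℝ => x ^ 2) (2 * x) x := by
      simpa using hasDerivAt_pow 2 x
    exact h1.div h2 (pow_ne_zero 2 hxne)
  have hD : deriv (deriv (fun x => ((v + 1) * Real.exp x - 1) / x)) x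
      = ((v + 1) * Real.exp x * x * (x ^ 2)
          - ((v + 1) * Real.exp x * x - ((v + 1) * Real.exp x - 1) * 1) * (2 * x))
        / (x ^ 2) ^ 2 := by
    rw [Filter.EventuallyEq.deriv_eq hev, hd2.deriv]
  have hkey : ((v + 1) * Real.exp x * x * (x ^ 2)
          - ((v + 1) * Real.exp x * x - ((v + 1) * Real.exp x - 1) * 1) * (2 * x))
        / (x ^ 2) ^ 2
      = v * (Real.exp x / x) * ((1 - 1 / x) ^ 2 + 1 / x ^ 2)
          + (Real.exp x / x) * ((1 - 1 / x) ^ 2 + (1 - 2 * Real.exp (-x)) / x ^ 2) := by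
    rw [Real.exp_neg]
    have he : Real.exp x ≠ 0 := (Real.exp_pos x).ne'
    field_simp
    ring
  rw [hD, hkey]
  refine ⟨rfl, ?_⟩
  have hform : v * (Real.exp x / x) * ((1 - 1 / x) ^ 2 + 1 / x ^ 2)
          + (Real.exp x / x) * ((1 - 1 / x) ^ 2 + (1 - 2 * Real.exp (-x)) / x ^ 2)
      = ((v + 1) * Real.exp x * (x ^ 2 - 2 * x + 2) - 2) / x ^ 3 := by
    rw [Real.exp_neg]
    have he : Real.exp x ≠ 0 := (Real.exp_pos x).ne'
    field_simp
    ring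
  rw [hform]
  apply div_pos _ (by positivity)
  have hq : 1 + x + x ^ 2 / 2 ≤ Real.exp x := Real.quadratic_le_exp_of_nonneg hx0.le
  have hquad : (0:ℝ) ≤ x ^ 2 - 2 * x + 2 := by nlinarith [sq_nonneg (x - 1)]
  have h1 : (1 + x + x ^ 2 / 2) * (x ^ 2 - 2 * x + 2) ≤ Real.exp x * (x ^ 2 - 2 * x + 2) :=
    mul_le_mul_of_nonneg_right hq hquad
  have h2 : (0:ℝ) ≤ v * (Real.exp x * (x ^ 2 - 2 * x + 2)) :=
    mul_nonneg hv (mul_nonneg (Real.exp_pos x).le hquad)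
  nlinarith [pow_pos hx0 4]
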